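/- Let λ, P, Q, Φ be dual numbers (with Q and sinh Φ invertible, i.e., with nonzero real parts) satisfying sinh Φ = −(1 + λP)·u and cosh Φ = −λQ·u where u = 1/sinh Φ, and −λτ = cosh Φ · u for a dual number τ. Then τ = −P/(λQ). -/
import Mathlib


open TrivSqZeroExt

/-- hyperbolic sine of a dual angle `Φ = φ + ε φ*`, given by `sinh φ + ε φ* cosh φ`. -/
noncomputable def dualSinh (Φ : DualNumber ℝ) : DualNumber ℝ :=
  inl (Real.sinh Φ.fst) + DualNumber.eps * inl (Φ.snd * Real.cosh Φ.fst)

/-- hyperbolic cosine of a dual angle `Φ = φ + ε φ*`, given by `cosh φ + ε φ* sinh φ`. -/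
noncomputable def dualCosh (Φ : DualNumber ℝ) : DualNumber ℝ :=
  inl (Real.cosh Φ.fst) + DualNumber.eps * inl (Φ.snd * Real.sinh Φ.fst)

lemma fst_dualSinh (Φ : DualNumber ℝ) : (dualSinh Φ).fst = Real.sinh Φ.fst := by
  rw [dualSinh, fst_add, fst_mul, fst_inl, DualNumber.fst_eps]; ring

lemma snd_dualSinh (Φ : DualNumber ℝ) : (dualSinh Φ).snd = Φ.snd * Real.cosh Φ.fst := by
  rw [dualSinh, snd_add, snd_mul, snd_inl, DualNumber.fst_eps, DualNumber.snd_eps, fst_inl,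
    snd_inl]; simp

lemma fst_dualCosh (Φ : DualNumber ℝ) : (dualCosh Φ).fst = Real.cosh Φ.fst := by
  rw [dualCosh, fst_add, fst_mul, fst_inl, DualNumber.fst_eps]; ring

lemma snd_dualCosh (Φ : DualNumber ℝ) : (dualCosh Φ).snd = Φ.snd * Real.sinh Φ.fst := by
  rw [dualCosh, snd_add, snd_mul, snd_inl, DualNumber.fst_eps, DualNumber.snd_eps, fst_inl,
    snd_inl]; simp

theorem stmt_9 (Φ lam P Q τ u : DualNumber ℝ)
    (hQ : Q.fst ≠ 0) (hS : (dualSinh Φ).fst ≠ 0)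
    (hu : u = Ring.inverse (dualSinh Φ))
    (h1 : dualSinh Φ = -(1 + lam * P) * u)
    (h2 : dualCosh Φ = -(lam * Q) * u)
    (h3 : -(lam * τ) = dualCosh Φ * u) :
    τ = -(P * Ring.inverse (lam * Q)) := by
  set s := dualSinh Φ with hsdef
  set c := dualCosh Φ with hcdef
  have hsu : IsUnit s := isUnit_iff_isUnit_fst.2 (isUnit_iff_ne_zero.2 hS)
  have hus : u * s = 1 := by rw [hu]; exact Ring.inverse_mul_cancel s hsu
  -- s * s = -(1 + lam * P)
  have hss : s * s = -(1 + lam * P) := by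
    calc s * s = -(1 + lam * P) * u * s := by rw [← h1]
    _ = -(1 + lam * P) * (u * s) := by ring
    _ = -(1 + lam * P) := by rw [hus, mul_one]
  have hcs : c * s = -(lam * Q) := by
    calc c * s = -(lam * Q) * u * s := by rw [← h2]
    _ = -(lam * Q) * (u * s) := by ring
    _ = -(lam * Q) := by rw [hus, mul_one]
  have h3' : -(lam * τ) * s = c := by
    rw [h3]; calc c * u * s = c * (u * s) := by ring
    _ = c := by rw [hus, mul_one]
  -- Pythagorean identity
  have pyth : c * c = 1 + s * s := by
    refine TrivSqZeroExt.ext ?_ ?_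
    · rw [fst_mul, fst_add, fst_mul, fst_one, hcdef, hsdef, fst_dualCosh, fst_dualSinh]
      nlinarith [Real.cosh_sq Φ.fst]
    · rw [snd_mul, snd_add, snd_mul, snd_one, hcdef, hsdef, fst_dualCosh, fst_dualSinh,
        snd_dualCosh, snd_dualSinh]
      simp [smul_eq_mul]
      ring
  have hcc : c * c = -(lam * P) := by rw [pyth, hss]; ring
  have hcfst : c.fst ≠ 0 := by
    rw [hcdef, fst_dualCosh]; exact ne_of_gt (Real.cosh_pos _)
  have hlQfst : (lam * Q).fst ≠ 0 := by
    have e := congrArg fst hcs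
    rw [fst_mul, fst_neg] at e
    intro h
    rw [h, neg_zero] at e
    exact mul_ne_zero hcfst hS e
  have hlfst : lam.fst ≠ 0 := by
    intro h
    apply hlQfst
    simp [fst_mul, h]
  have hlu : IsUnit lam := isUnit_iff_isUnit_fst.2 (isUnit_iff_ne_zero.2 hlfst)
  have hlQu : IsUnit (lam * Q) := isUnit_iff_isUnit_fst.2 (isUnit_iff_ne_zero.2 hlQfst)
  -- key: τ * (lam * Q) = -P
  have key : τ * (lam * Q) = -P := by
    have e1 : (-(lam * τ) * s) * s = c * s := by rw [h3']
    have e2 : -(lam * τ) * (s * s) = -(lam * Q) := by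
      rw [← hcs, ← e1]; ring
    rw [hss] at e2
    -- -(lam*τ) * -(1 + lam*P) = -(lam*Q)
    -- e2 : (lam*τ) * (1 + lam*P) = -(lam*Q)
    have e3 : lam * (τ * (lam * Q)) = lam * (-P) := by
      have hτ : (lam * τ) * (lam * Q) = c * c := by
        calc (lam * τ) * (lam * Q) = -(lam * τ) * (c * s) := by rw [hcs]; ring
        _ = (-(lam * τ) * s) * c := by ring
        _ = c * c := by rw [h3']
      rw [hcc] at hτ
      calc lam * (τ * (lam * Q)) = (lam * τ) * (lam * Q) := by ring
      _ = -(lam * P) := hτ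
      _ = lam * (-P) := by ring
    exact hlu.mul_left_cancel e3
  have := Ring.mul_inverse_cancel (lam * Q) hlQu
  calc τ = τ * ((lam * Q) * Ring.inverse (lam * Q)) := by rw [this, mul_one]
  _ = (τ * (lam * Q)) * Ring.inverse (lam * Q) := by ring
  _ = -(P * Ring.inverse (lam * Q)) := by rw [key]; ring
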